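/- Consider ż = f(z,u) with f : ℝ^{n_z} × ℝ^{n_u} → ℝ^{n_z} polynomial, constraint functions a_{i₁}, b_{i₂}, c_{i₃} polynomial, and D = {(z,u) : a_{i₁}(z,u) ≥ 0 for all i₁ and b_{i₂}(z,u) = 0 for all i₂}. Suppose V : ℝ^{n_z} → ℝ is polynomial, p_{i₁}, q_{i₂} are polynomial with p_{i₁} ≥ 0 on D, r_{i₃} ≥ 0 are constants, and −∇V(z)·f(z,u) − Σ_{i₁} p_{i₁}(z,u)a_{i₁}(z,u) − Σ_{i₂} q_{i₂}(z,u)b_{i₂}(z,u) − Σ_{i₃} r_{i₃}c_{i₃}(z,u) ≥ 0 for all (z,u). Then along every admissible trajectory (z(t),u(t)), V(z(T)) ≤ V(z(0)) for all T ≥ 0. -/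

import Mathlib

open MvPolynomial Set

private lemma eval_diffAt' {n : ℕ} (P : MvPolynomial (Fin n) ℝ) (x : EuclideanSpace ℝ (Fin n)) :
    DifferentiableAt ℝ (fun y : EuclideanSpace ℝ (Fin n) => eval (y : Fin n → ℝ) P) x := by
  have h1 : AnalyticOnNhd ℝ (fun v : Fin n → ℝ => eval v P) Set.univ :=
    AnalyticOnNhd.eval_mvPolynomial P
  have h2 : DifferentiableAt ℝ (fun v : Fin n → ℝ => eval v P)
      ((EuclideanSpace.equiv (Fin n) ℝ) x) := (h1 _ trivial).differentiableAt
  exact h2.comp x (EuclideanSpace.equiv (Fin n) ℝ).differentiableAt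

private lemma poly2_cont' {n m : ℕ}
    (g : EuclideanSpace ℝ (Fin n) → EuclideanSpace ℝ (Fin m) → ℝ)
    (P : MvPolynomial (Fin n ⊕ Fin m) ℝ)
    (hg : ∀ z u, g z u = eval (Sum.elim z u) P) :
    Continuous (fun p : EuclideanSpace ℝ (Fin n) × EuclideanSpace ℝ (Fin m) => g p.1 p.2) := by
  have h1 : Continuous (fun v : (Fin n ⊕ Fin m) → ℝ => eval v P) :=
    continuousOn_univ.1 (AnalyticOnNhd.eval_mvPolynomial P).continuousOn
  have h2 : Continuous (fun p : EuclideanSpace ℝ (Fin n) × EuclideanSpace ℝ (Fin m) =>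
      (Sum.elim p.1 p.2 : Fin n ⊕ Fin m → ℝ)) := by
    apply continuous_pi
    rintro (i | j)
    · exact (EuclideanSpace.proj i).continuous.comp continuous_fst
    · exact (EuclideanSpace.proj j).continuous.comp continuous_snd
  simp only [hg]
  exact h1.comp h2



/-- **Lyapunov decrease along admissible trajectories.**
For the constrained system `ż = f(z,u)` with polynomial data, if there are polynomial
multipliers `p` (nonnegative on the constraint set `D`), `q`, and nonnegative constants `r`
with `−∇V·f − Σ p·a − Σ q·b − Σ r·c ≥ 0` everywhere, where `V` is polynomial, then along
every admissible trajectory `V (z T) ≤ V (z 0)` for all `T ≥ 0`. -/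
theorem stmt_3 {nz nu N1 N2 N3 : ℕ}
    (f : EuclideanSpace ℝ (Fin nz) → EuclideanSpace ℝ (Fin nu) → EuclideanSpace ℝ (Fin nz))
    (hf : ∀ i : Fin nz, ∃ P : MvPolynomial (Fin nz ⊕ Fin nu) ℝ,
        ∀ z u, f z u i = MvPolynomial.eval (Sum.elim z u) P)
    (a : Fin N1 → EuclideanSpace ℝ (Fin nz) → EuclideanSpace ℝ (Fin nu) → ℝ)
    (ha : ∀ i, ∃ P : MvPolynomial (Fin nz ⊕ Fin nu) ℝ,
        ∀ z u, a i z u = MvPolynomial.eval (Sum.elim z u) P)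
    (b : Fin N2 → EuclideanSpace ℝ (Fin nz) → EuclideanSpace ℝ (Fin nu) → ℝ)
    (hb : ∀ j, ∃ P : MvPolynomial (Fin nz ⊕ Fin nu) ℝ,
        ∀ z u, b j z u = MvPolynomial.eval (Sum.elim z u) P)
    (c : Fin N3 → EuclideanSpace ℝ (Fin nz) → EuclideanSpace ℝ (Fin nu) → ℝ)
    (hc : ∀ k, ∃ P : MvPolynomial (Fin nz ⊕ Fin nu) ℝ,
        ∀ z u, c k z u = MvPolynomial.eval (Sum.elim z u) P)
    (V : EuclideanSpace ℝ (Fin nz) → ℝ)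
    (hVpoly : ∃ P : MvPolynomial (Fin nz) ℝ, ∀ z, V z = MvPolynomial.eval z P)
    (p : Fin N1 → EuclideanSpace ℝ (Fin nz) → EuclideanSpace ℝ (Fin nu) → ℝ)
    (hppoly : ∀ i, ∃ P : MvPolynomial (Fin nz ⊕ Fin nu) ℝ,
        ∀ z u, p i z u = MvPolynomial.eval (Sum.elim z u) P)
    (q : Fin N2 → EuclideanSpace ℝ (Fin nz) → EuclideanSpace ℝ (Fin nu) → ℝ)
    (hqpoly : ∀ j, ∃ P : MvPolynomial (Fin nz ⊕ Fin nu) ℝ,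
        ∀ z u, q j z u = MvPolynomial.eval (Sum.elim z u) P)
    (r : Fin N3 → ℝ) (hr : ∀ k, 0 ≤ r k)
    (hp : ∀ z u, (∀ i, 0 ≤ a i z u) → (∀ j, b j z u = 0) → ∀ i, 0 ≤ p i z u)
    (hmain : ∀ z u, 0 ≤ -(inner ℝ (gradient V z) (f z u) : ℝ)
        - ∑ i, p i z u * a i z u - ∑ j, q j z u * b j z u - ∑ k, r k * c k z u) :
    ∀ (z : ℝ → EuclideanSpace ℝ (Fin nz)) (u : ℝ → EuclideanSpace ℝ (Fin nu)),
      (∀ t, 0 ≤ t → HasDerivAt z (f (z t) (u t)) t) →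
      ContinuousOn u (Set.Ici 0) →
      (∀ t, 0 ≤ t → (∀ i, 0 ≤ a i (z t) (u t)) ∧ (∀ j, b j (z t) (u t) = 0)) →
      (∀ T, 0 ≤ T → ∀ k, 0 ≤ ∫ t in (0:ℝ)..T, c k (z t) (u t)) →
      ∀ T, 0 ≤ T → V (z T) ≤ V (z 0) := by

  intro z u hz hu hD hcint T hT
  -- differentiability of V everywhere
  have hVd : ∀ x, DifferentiableAt ℝ V x := by
    intro x
    obtain ⟨P, hP⟩ := hVpoly
    have : V = fun y : EuclideanSpace ℝ (Fin nz) => eval (y : Fin nz → ℝ) P := funext hP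
    rw [this]
    exact eval_diffAt' P x
  -- continuity of trajectory
  have hzc : ContinuousOn z (Ici (0:ℝ)) := fun t ht => (hz t ht).continuousAt.continuousWithinAt
  have htraj : ContinuousOn (fun t => (z t, u t)) (Ici (0:ℝ)) := hzc.prodMk hu
  have hck : ∀ k, ContinuousOn (fun t => c k (z t) (u t)) (Ici (0:ℝ)) := by
    intro k
    obtain ⟨P, hP⟩ := hc k
    exact (poly2_cont' (c k) P hP).comp_continuousOn htraj
  -- derivative of V ∘ z
  have hVz : ∀ t, 0 ≤ t → HasDerivAt (fun s => V (z s))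
      ((inner ℝ (gradient V (z t)) (f (z t) (u t)) : ℝ)) t := by
    intro t ht
    have h1 : HasGradientAt V (gradient V (z t)) (z t) := (hVd (z t)).hasGradientAt
    have h2 := h1.hasFDerivAt.comp_hasDerivAt t (hz t ht)
    have h3 : HasDerivAt (fun s => V (z s)) _ t := h2
    rwa [InnerProductSpace.toDual_apply_apply] at h3
  -- the auxiliary function G
  set I : Fin N3 → ℝ → ℝ := fun k t => ∫ s in (0:ℝ)..t, c k (z s) (u s) with hIdef
  set G : ℝ → ℝ := fun t => V (z t) + ∑ k, r k * I k t with hGdef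
  -- derivative of I k
  have hIk : ∀ k, ∀ t ∈ Ioo (0:ℝ) T, HasDerivAt (I k) (c k (z t) (u t)) t := by
    intro k t ht
    have hsub : uIcc (0:ℝ) t ⊆ Ici 0 := by
      rw [uIcc_of_le ht.1.le]; exact Icc_subset_Ici_self
    have hint : IntervalIntegrable (fun s => c k (z s) (u s)) MeasureTheory.volume 0 t :=
      ((hck k).mono hsub).intervalIntegrable
    refine intervalIntegral.integral_hasDerivAt_right hint ?_ ?_
    · exact ContinuousOn.stronglyMeasurableAtFilter isOpen_Ioi
        ((hck k).mono Ioi_subset_Ici_self) t ht.1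
    · exact (hck k).continuousAt (Filter.mem_of_superset (Ioi_mem_nhds ht.1) Ioi_subset_Ici_self)
  -- derivative of G
  have hGd : ∀ t ∈ Ioo (0:ℝ) T, HasDerivAt G
      ((inner ℝ (gradient V (z t)) (f (z t) (u t)) : ℝ) + ∑ k, r k * c k (z t) (u t)) t := by
    intro t ht
    exact (hVz t ht.1.le).add (HasDerivAt.fun_sum fun k _ => (hIk k t ht).const_mul (r k))
  -- G is antitone on Icc 0 T
  have hGanti : AntitoneOn G (Icc 0 T) := by
    apply antitoneOn_of_deriv_nonpos (convex_Icc _ _)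
    · -- continuity of G on Icc 0 T
      apply ContinuousOn.add
      · exact fun t ht => ((hVd (z t)).continuousAt.comp_continuousWithinAt
          ((hzc t (mem_of_mem_of_subset ht Icc_subset_Ici_self)).mono Icc_subset_Ici_self))
      · apply continuousOn_finset_sum
        intro k _
        have hint : MeasureTheory.IntegrableOn (fun s => c k (z s) (u s)) (uIcc 0 T) := by
          rw [uIcc_of_le hT]
          exact ((hck k).mono Icc_subset_Ici_self).integrableOn_compact isCompact_Icc
        have hprim := intervalIntegral.continuousOn_primitive_interval hint
        rw [uIcc_of_le hT] at hprim
        exact continuousOn_const.mul hprim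
    · -- differentiability on interior
      rw [interior_Icc]
      intro t ht
      exact (hGd t ht).differentiableAt.differentiableWithinAt
    · rw [interior_Icc]
      intro t ht
      have hd := (hGd t ht).deriv
      rw [hd]
      -- the derivative is ≤ 0
      have hb0 := (hD t (le_of_lt ht.1)).2
      have ha0 := (hD t (le_of_lt ht.1)).1
      have hmain' := hmain (z t) (u t)
      have hpa : 0 ≤ ∑ i, p i (z t) (u t) * a i (z t) (u t) :=
        Finset.sum_nonneg fun i _ =>
          mul_nonneg (hp _ _ ha0 hb0 i) (ha0 i)
      have hqb : ∑ j, q j (z t) (u t) * b j (z t) (u t) = 0 := by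
        apply Finset.sum_eq_zero; intro j _; rw [hb0 j, mul_zero]
      rw [hqb] at hmain'
      linarith
  -- compute G 0 and bound
  have h0T : (0:ℝ) ∈ Icc (0:ℝ) T := ⟨le_refl _, hT⟩
  have hTT : T ∈ Icc (0:ℝ) T := ⟨hT, le_refl _⟩
  have hGT : G T ≤ G 0 := hGanti h0T hTT hT
  have hG0 : G 0 = V (z 0) := by
    simp [hGdef, hIdef]
  have hsum : 0 ≤ ∑ k, r k * I k T :=
    Finset.sum_nonneg fun k _ => mul_nonneg (hr k) (hcint T hT k)
  have : V (z T) + ∑ k, r k * I k T ≤ V (z 0) := by rw [← hG0]; exact hGT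
  linarith
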